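/- Let X be a metric continuum and let A ⊆ B be subcontinua of X (nonempty compact connected subsets). Then there exists a map α : [0,1] → C(X) into the hyperspace of subcontinua of X, continuous with respect to the Hausdorff metric, such that α(0) = A, α(1) = B, and α(s) ⊆ α(t) whenever 0 ≤ s ≤ t ≤ 1. -/

import Mathlib

/-- A space has the fixed point property: every continuous self-map has a fixed point. -/
def HasFPP (Y : Type*) [TopologicalSpace Y] : Prop :=
  ∀ f : Y → Y, Continuous f → ∃ x, f x = x

/-- A space has the periodic point property: every continuous self-map has a periodic point. -/
def HasPPP (Y : Type*) [TopologicalSpace Y] : Prop :=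
  ∀ f : Y → Y, Continuous f → ∃ x, ∃ n : ℕ, 1 ≤ n ∧ f^[n] x = x

/-- Local fixed point property: there is an open basis whose members have closures with FPP. -/
def HasLFPP (Y : Type*) [TopologicalSpace Y] : Prop :=
  ∃ 𝓑 : Set (Set Y), TopologicalSpace.IsTopologicalBasis 𝓑 ∧
    ∀ B ∈ 𝓑, HasFPP ↥(closure B)

/-- Weak local fixed point property. -/
def HasWLFPP (Y : Type*) [TopologicalSpace Y] : Prop :=
  ∃ 𝓑 : Set (Set Y), TopologicalSpace.IsTopologicalBasis 𝓑 ∧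
    ∀ B ∈ 𝓑, ∀ f : Y → Y, Continuous f → f '' closure B ⊆ B → ∃ x ∈ B, f x = x

/-- Local periodic point property. -/
def HasLPPP (Y : Type*) [TopologicalSpace Y] : Prop :=
  ∃ 𝓑 : Set (Set Y), TopologicalSpace.IsTopologicalBasis 𝓑 ∧
    ∀ B ∈ 𝓑, HasPPP ↥(closure B)

/-- Weak local periodic point property. -/
def HasWLPPP (Y : Type*) [TopologicalSpace Y] : Prop :=
  ∃ 𝓑 : Set (Set Y), TopologicalSpace.IsTopologicalBasis 𝓑 ∧
    ∀ B ∈ 𝓑, ∀ f : Y → Y, Continuous f → f '' closure B ⊆ B →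
      ∃ x ∈ B, ∃ n : ℕ, 1 ≤ n ∧ f^[n] x = x

/-- A subset is a simple closed curve if it is homeomorphic to the unit circle. -/
def IsSimpleClosedCurve {α : Type*} [TopologicalSpace α] (S : Set α) : Prop :=
  Nonempty (↥S ≃ₜ ↥(Metric.sphere (0 : EuclideanSpace ℝ (Fin 2)) 1))

/-- Covering dimension at most `n`: every finite open cover admits an open shrinking
of order at most `n + 1`. -/
def CoveringDimLE (Y : Type*) [TopologicalSpace Y] (n : ℕ) : Prop :=
  ∀ (ι : Type) [Finite ι] (U : ι → Set Y), (∀ i, IsOpen (U i)) → (⋃ i, U i) = Set.univ →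
    ∃ V : ι → Set Y, (∀ i, IsOpen (V i)) ∧ (∀ i, V i ⊆ U i) ∧ (⋃ i, V i) = Set.univ ∧
      ∀ y : Y, {i | y ∈ V i}.ncard ≤ n + 1

/-- A dendrite: a locally connected (metric) continuum containing no simple closed curve. -/
def IsDendrite {α : Type*} [TopologicalSpace α] (D : Set α) : Prop :=
  IsCompact D ∧ IsConnected D ∧ LocallyConnectedSpace ↥D ∧ ∀ S ⊆ D, ¬ IsSimpleClosedCurve S

/-- A local dendrite: every point has a closed neighborhood which is a dendrite. -/
def IsLocalDendrite (Y : Type*) [TopologicalSpace Y] : Prop :=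
  ∀ y : Y, ∃ N : Set Y, N ∈ nhds y ∧ IsClosed N ∧ IsDendrite N

open Metric Set TopologicalSpace

section OCPrivate

noncomputable def ocMu {X : Type*} [MetricSpace X] (u : ℕ → X) (K : Set X) : ℝ :=
  ∑' n, (1/2:ℝ)^n * min (Metric.infDist (u n) K) 1

variable {X : Type*} [MetricSpace X] {u : ℕ → X}

lemma ocTerm_nonneg (K : Set X) (n : ℕ) : 0 ≤ (1/2:ℝ)^n * min (Metric.infDist (u n) K) 1 :=
  mul_nonneg (by positivity) (le_min Metric.infDist_nonneg zero_le_one)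

lemma ocTerm_le (K : Set X) (n : ℕ) :
    (1/2:ℝ)^n * min (Metric.infDist (u n) K) 1 ≤ (1/2:ℝ)^n := by
  have h1 : min (Metric.infDist (u n) K) 1 ≤ 1 := min_le_right _ _
  have h2 : (0:ℝ) ≤ (1/2:ℝ)^n := by positivity
  nlinarith

lemma ocMu_summable (K : Set X) :
    Summable (fun n => (1/2:ℝ)^n * min (Metric.infDist (u n) K) 1) :=
  Summable.of_nonneg_of_le (ocTerm_nonneg K) (ocTerm_le K)
    (summable_geometric_of_lt_one (by norm_num) (by norm_num))

lemma ocMu_anti {K L : Set X} (hKL : K ⊆ L) (hK : K.Nonempty) : ocMu u L ≤ ocMu u K := by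
  refine Summable.tsum_le_tsum (fun n => ?_) (ocMu_summable L) (ocMu_summable K)
  have := Metric.infDist_le_infDist_of_subset (x := u n) hKL hK
  have h2 : (0:ℝ) ≤ (1/2:ℝ)^n := by positivity
  have := min_le_min this (le_refl (1:ℝ))
  nlinarith

lemma ocMu_lt (hu : DenseRange u) {K L : Set X} (hKcl : IsClosed K) (hKne : K.Nonempty)
    (hKL : K ⊆ L) {p : X} (hpL : p ∈ L) (hpK : p ∉ K) : ocMu u L < ocMu u K := by
  have hd : 0 < Metric.infDist p K := by
    rwa [← hKcl.notMem_iff_infDist_pos hKne]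
  set d : ℝ := Metric.infDist p K with hdd
  set r : ℝ := min (d / 3) (1/2) with hr
  have hrpos : 0 < r := lt_min (by linarith) (by norm_num)
  obtain ⟨y, ⟨n, rfl⟩, hy⟩ := Metric.mem_closure_iff.mp (hu p) r hrpos
  refine Summable.tsum_lt_tsum_of_nonneg (ocTerm_nonneg L) (fun m => ?_) (i := n) ?_ (ocMu_summable K)
  · have := Metric.infDist_le_infDist_of_subset (x := u m) hKL hKne
    have h2 : (0:ℝ) ≤ (1/2:ℝ)^m := by positivity
    have := min_le_min this (le_refl (1:ℝ))
    nlinarith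
  · have h2 : (0:ℝ) < (1/2:ℝ)^n := by positivity
    have hL : Metric.infDist (u n) L ≤ r := by
      rw [dist_comm] at hy
      exact (Metric.infDist_le_dist_of_mem hpL).trans (le_of_lt hy)
    have hKn : r < min (Metric.infDist (u n) K) 1 := by
      have h3 : d - r ≤ Metric.infDist (u n) K := by
        have := Metric.infDist_le_dist_of_mem (x := p) (y := u n) (s := K)
        have htri : d ≤ dist p (u n) + Metric.infDist (u n) K := by
          have h4 := Metric.infDist_le_infDist_add_dist (x := p) (y := u n) (s := K)
          rw [hdd]
          linarith
        linarith
      rcases le_total (d/3) (1/2 : ℝ) with hc | hc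
      · have hrr : r = d/3 := min_eq_left hc
        refine lt_min ?_ (by rw [hrr]; linarith)
        rw [hrr]; rw [hrr] at h3; linarith
      · have hrr : r = 1/2 := min_eq_right hc
        refine lt_min ?_ (by rw [hrr]; norm_num)
        rw [hrr] at h3 ⊢
        linarith
    have hLmin : min (Metric.infDist (u n) L) 1 ≤ r := by
      exact le_trans (min_le_left _ _) hL
    have := lt_of_le_of_lt hLmin hKn
    nlinarith

lemma ocMu_le_add {I K : Set X} (hI : I.Nonempty) (hIK : I ⊆ K) (hKcomp : IsCompact K)
    {δ : ℝ} (hδ : 0 < δ) (hth : K ⊆ Metric.thickening δ I) :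
    ocMu u I ≤ ocMu u K + 2 * δ := by
  have hterm : ∀ n, (1/2:ℝ)^n * min (Metric.infDist (u n) I) 1 ≤
      (1/2:ℝ)^n * min (Metric.infDist (u n) K) 1 + (1/2:ℝ)^n * δ := by
    intro n
    have hKne : K.Nonempty := hI.mono hIK
    obtain ⟨y, hyK, hyd⟩ := hKcomp.exists_infDist_eq_dist hKne (u n)
    obtain ⟨z, hzI, hz⟩ := Metric.mem_thickening_iff.mp (hth hyK)
    have h1 : Metric.infDist (u n) I ≤ Metric.infDist (u n) K + δ := by
      have := Metric.infDist_le_dist_of_mem (x := u n) hzI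
      have htr : dist (u n) z ≤ dist (u n) y + dist y z := dist_triangle _ _ _
      rw [← hyd] at htr
      linarith
    have h2 : (0:ℝ) ≤ (1/2:ℝ)^n := by positivity
    have h3 : min (Metric.infDist (u n) I) 1 ≤ min (Metric.infDist (u n) K) 1 + δ := by
      rcases le_total (Metric.infDist (u n) K) 1 with hc | hc
      · rw [min_eq_left hc]
        exact le_trans (min_le_left _ _) h1
      · rw [min_eq_right hc]
        have := min_le_right (Metric.infDist (u n) I) 1
        linarith
    nlinarith
  have hsum : Summable (fun n => (1/2:ℝ)^n * min (Metric.infDist (u n) K) 1 + (1/2:ℝ)^n * δ) := by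
    exact Summable.add (ocMu_summable K)
      (Summable.mul_right δ (summable_geometric_of_lt_one (by norm_num) (by norm_num)))
  calc ocMu u I ≤ ∑' n, ((1/2:ℝ)^n * min (Metric.infDist (u n) K) 1 + (1/2:ℝ)^n * δ) :=
        Summable.tsum_le_tsum hterm (ocMu_summable I) hsum
    _ = ocMu u K + 2 * δ := by
        rw [Summable.tsum_add (ocMu_summable K)
          (Summable.mul_right δ (summable_geometric_of_lt_one (by norm_num) (by norm_num)))]
        rw [tsum_mul_right, tsum_geometric_two]
        ring_nf
        rw [add_comm]; congr 1
        exact tsum_congr fun n => mul_comm _ _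


variable {X : Type*} [MetricSpace X]

/-- A directed family of nonempty compact closed sets with empty intersection has an empty member
(contrapositive packaging for chains). -/
lemma ocChain_exists_subset_open {F : Set (Set X)} (hne : F.Nonempty)
    (hchain : IsChain (· ⊆ ·) F) (hcomp : ∀ K ∈ F, IsCompact K)
    {T : Set X} (hT : IsOpen T) (hInt : ⋂₀ F ⊆ T) : ∃ K ∈ F, K ⊆ T := by
  by_contra hcon
  push_neg at hcon
  haveI : Nonempty F := hne.to_subtype
  have hclaim := IsCompact.nonempty_iInter_of_directed_nonempty_isCompact_isClosed
    (t := fun K : F => (K : Set X) \ T) ?_ ?_ ?_ ?_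
  · obtain ⟨x, hx⟩ := hclaim
    simp only [mem_iInter, mem_diff] at hx
    have hxI : x ∈ ⋂₀ F := by
      rw [mem_sInter]; intro K hK; exact (hx ⟨K, hK⟩).1
    exact (hx ⟨hne.some, hne.some_mem⟩).2 (hInt hxI)
  · rintro ⟨K, hK⟩ ⟨L, hL⟩
    rcases hchain.total hK hL with h | h
    · exact ⟨⟨K, hK⟩, fun x hx => hx, fun x hx => ⟨h hx.1, hx.2⟩⟩
    · exact ⟨⟨L, hL⟩, fun x hx => ⟨h hx.1, hx.2⟩, fun x hx => hx⟩
  · rintro ⟨K, hK⟩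
    rcases not_subset.mp (hcon K hK) with ⟨x, hx1, hx2⟩
    exact ⟨x, hx1, hx2⟩
  · rintro ⟨K, hK⟩; exact (hcomp K hK).diff hT
  · rintro ⟨K, hK⟩; exact ((hcomp K hK).isClosed).sdiff hT

/-- The intersection of a chain gets approximated from outside by members. -/
lemma ocChain_inter_thickening {F : Set (Set X)} (hne : F.Nonempty)
    (hchain : IsChain (· ⊆ ·) F) (hcomp : ∀ K ∈ F, IsCompact K)
    {δ : ℝ} (hδ : 0 < δ) : ∃ K ∈ F, K ⊆ thickening δ (⋂₀ F) :=
  ocChain_exists_subset_open hne hchain hcomp isOpen_thickening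
    (self_subset_thickening hδ _)

/-- The closure of the union of a chain is approximated from inside by members. -/
lemma ocChain_union_thickening [CompactSpace X] {F : Set (Set X)} (hne : F.Nonempty)
    (hchain : IsChain (· ⊆ ·) F) (hcomp : ∀ K ∈ F, IsCompact K)
    {δ : ℝ} (hδ : 0 < δ) : ∃ K ∈ F, closure (⋃₀ F) ⊆ thickening δ K := by
  set L : Set X := closure (⋃₀ F) with hL
  have hLc : IsCompact L := isClosed_closure.isCompact
  by_contra hcon
  push_neg at hcon
  haveI : Nonempty F := hne.to_subtype
  have hclaim := IsCompact.nonempty_iInter_of_directed_nonempty_isCompact_isClosed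
    (t := fun K : F => L \ thickening δ (K : Set X)) ?_ ?_ ?_ ?_
  · obtain ⟨x, hx⟩ := hclaim
    simp only [mem_iInter, mem_diff] at hx
    have hxL : x ∈ L := (hx ⟨hne.some, hne.some_mem⟩).1
    obtain ⟨y, hy, hxy⟩ := Metric.mem_closure_iff.mp hxL δ hδ
    obtain ⟨K, hKF, hyK⟩ := hy
    exact (hx ⟨K, hKF⟩).2 (Metric.mem_thickening_iff.mpr ⟨y, hyK, hxy⟩)
  · rintro ⟨K, hK⟩ ⟨L', hL'⟩
    rcases hchain.total hK hL' with h | h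
    · refine ⟨⟨L', hL'⟩, fun x hx => ⟨hx.1, fun hc => hx.2 ?_⟩, fun x hx => hx⟩
      exact thickening_subset_of_subset δ h hc
    · refine ⟨⟨K, hK⟩, fun x hx => hx, fun x hx => ⟨hx.1, fun hc => hx.2 ?_⟩⟩
      exact thickening_subset_of_subset δ h hc
  · rintro ⟨K, hK⟩
    rcases not_subset.mp (hcon K hK) with ⟨x, hx1, hx2⟩
    exact ⟨x, hx1, hx2⟩
  · rintro ⟨K, hK⟩; exact hLc.diff isOpen_thickening
  · rintro ⟨K, hK⟩; exact hLc.isClosed.sdiff isOpen_thickening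

/-- The intersection of a chain of compact connected sets is preconnected. -/
lemma ocChain_sInter_preconnected {F : Set (Set X)} (hne : F.Nonempty)
    (hchain : IsChain (· ⊆ ·) F) (hcomp : ∀ K ∈ F, IsCompact K)
    (hconn : ∀ K ∈ F, IsPreconnected K) : IsPreconnected (⋂₀ F) := by
  set I : Set X := ⋂₀ F with hI
  rintro U V hU hV hUV ⟨x, hxI, hxU⟩ ⟨y, hyI, hyV⟩
  by_contra hcon
  rw [not_nonempty_iff_eq_empty] at hcon
  have hIcl : IsClosed I := isClosed_sInter (fun K hK => (hcomp K hK).isClosed)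
  set F1 : Set X := I \ V with hF1
  set F2 : Set X := I \ U with hF2
  have hF1c : IsCompact F1 := ((hcomp _ hne.some_mem).of_isClosed_subset
      (hIcl.sdiff hV) (fun z hz => (sInter_subset_of_mem hne.some_mem) hz.1))
  have hF2c : IsCompact F2 := ((hcomp _ hne.some_mem).of_isClosed_subset
      (hIcl.sdiff hU) (fun z hz => (sInter_subset_of_mem hne.some_mem) hz.1))
  have hdisj : Disjoint F1 F2 := by
    rw [disjoint_iff_inter_eq_empty]
    ext z; simp only [mem_inter_iff, mem_diff, mem_empty_iff_false, iff_false]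
    rintro ⟨⟨hzI, hzV⟩, ⟨_, hzU⟩⟩
    rcases hUV hzI with h | h
    exacts [hzU h, hzV h]
  obtain ⟨ε, hε, hdisj2⟩ := hdisj.exists_thickenings hF1c hF2c.isClosed
  have hsubUV : ⋂₀ F ⊆ thickening ε F1 ∪ thickening ε F2 := by
    intro z hz
    by_cases hzV : z ∈ V
    · by_cases hzU : z ∈ U
      · exact absurd ⟨hz, hzU, hzV⟩ (eq_empty_iff_forall_notMem.mp hcon z)
      · exact Or.inr (self_subset_thickening hε _ ⟨hz, hzU⟩)
    · exact Or.inl (self_subset_thickening hε _ ⟨hz, hzV⟩)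
  obtain ⟨K, hKF, hKsub⟩ := ocChain_exists_subset_open hne hchain hcomp
    (T := thickening ε F1 ∪ thickening ε F2) (isOpen_thickening.union isOpen_thickening) hsubUV
  have h1 : (K ∩ thickening ε F1).Nonempty := by
    refine ⟨x, sInter_subset_of_mem hKF hxI, self_subset_thickening hε _ ?_⟩
    exact ⟨hxI, fun hxV => (eq_empty_iff_forall_notMem.mp hcon x) ⟨hxI, hxU, hxV⟩⟩
  have h2 : (K ∩ thickening ε F2).Nonempty := by
    refine ⟨y, sInter_subset_of_mem hKF hyI, self_subset_thickening hε _ ?_⟩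
    exact ⟨hyI, fun hyU => (eq_empty_iff_forall_notMem.mp hcon y) ⟨hyI, hyU, hyV⟩⟩
  obtain ⟨z, _, hz⟩ := hconn K hKF _ _ isOpen_thickening isOpen_thickening hKsub h1 h2
  rw [disjoint_iff_inter_eq_empty] at hdisj2
  rw [hdisj2] at hz
  exact hz


/-- Boundary bumping: between two distinct nested continua there is a third one. -/
lemma ocExists_between {K1 K2 : Set X} (h1c : IsCompact K1) (h1conn : IsConnected K1)
    (h2c : IsCompact K2) (h2conn : IsConnected K2) (hsub : K1 ⊆ K2) (hne : K1 ≠ K2) :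
    ∃ M, IsCompact M ∧ IsConnected M ∧ K1 ⊆ M ∧ M ⊆ K2 ∧ M ≠ K1 ∧ M ≠ K2 := by
  obtain ⟨p, hpK2, hpK1⟩ : ∃ p, p ∈ K2 ∧ p ∉ K1 := by
    by_contra h
    push_neg at h
    exact hne (hsub.antisymm h)
  have hd : 0 < infDist p K1 := by
    rwa [← h1c.isClosed.notMem_iff_infDist_pos h1conn.nonempty]
  set r : ℝ := infDist p K1 / 2 with hrdef
  have hr : 0 < r := by positivity
  set D : Set X := {x ∈ K2 | infDist x K1 ≤ r} with hDdef
  have hDsub : D ⊆ K2 := fun x hx => hx.1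
  have hDcl : IsClosed D :=
    (h2c.isClosed.isClosed_le (continuous_infDist_pt K1).continuousOn continuousOn_const)
  have hDcomp : IsCompact D := h2c.of_isClosed_subset hDcl hDsub
  have hK1D : K1 ⊆ D := fun x hx => ⟨hsub hx, by
    rw [infDist_zero_of_mem hx]; exact le_of_lt hr⟩
  obtain ⟨a0, ha0K1⟩ := h1conn.nonempty
  have ha0D : a0 ∈ D := hK1D ha0K1
  have hpD : p ∉ D := by
    intro hp
    have := hp.2
    rw [hrdef] at this
    linarith
  set M : Set X := connectedComponentIn D a0 with hMdef
  have hMD : M ⊆ D := connectedComponentIn_subset _ _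
  have hMconn : IsConnected M := isConnected_connectedComponentIn_iff.mpr ha0D
  have hK1M : K1 ⊆ M :=
    h1conn.isPreconnected.subset_connectedComponentIn ha0K1 hK1D
  haveI : CompactSpace ↥D := isCompact_iff_compactSpace.mp hDcomp
  set a : ↥D := ⟨a0, ha0D⟩ with hadef
  have hMim : M = Subtype.val '' connectedComponent a := connectedComponentIn_eq_image ha0D
  have hMcomp : IsCompact M := by
    rw [hMim]
    exact (isClosed_connectedComponent.isCompact).image continuous_subtype_val
  set S : Set X := {x ∈ D | infDist x K1 = r} with hSdef
  have key : (M ∩ S).Nonempty := by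
    rw [nonempty_iff_ne_empty]
    intro hMS
    set S' : Set ↥D := Subtype.val ⁻¹' S with hS'def
    have hScl : IsClosed S := by
      have hSeq : S = D ∩ (fun x => infDist x K1) ⁻¹' {r} := by
        ext x
        simp only [hSdef, mem_setOf_eq, mem_inter_iff, mem_preimage, mem_singleton_iff]
      rw [hSeq]
      exact hDcl.inter (isClosed_singleton.preimage (continuous_infDist_pt K1))
    have hS'cl : IsClosed S' := IsClosed.preimage continuous_subtype_val hScl
    have hS'comp : IsCompact S' := hS'cl.isCompact
    have hccS' : connectedComponent a ∩ S' = ∅ := by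
      rw [eq_empty_iff_forall_notMem]
      rintro z ⟨hz1, hz2⟩
      have : (z : X) ∈ M ∩ S := ⟨hMim ▸ mem_image_of_mem _ hz1, hz2⟩
      rw [hMS] at this
      exact this
    have hcover : S' ⊆ ⋃ (Z : {Z : Set ↥D // IsClopen Z ∧ a ∈ Z}), (↑Z : Set ↥D)ᶜ := by
      intro x hx
      by_contra hxn
      simp only [mem_iUnion, mem_compl_iff, not_exists, not_not] at hxn
      have hxcc : x ∈ connectedComponent a := by
        rw [connectedComponent_eq_iInter_isClopen a, mem_iInter]
        exact fun Z => hxn Z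
      exact (eq_empty_iff_forall_notMem.mp hccS' x) ⟨hxcc, hx⟩
    obtain ⟨t, ht⟩ := hS'comp.elim_finite_subcover _ (fun Z => Z.2.1.1.isOpen_compl) hcover
    set Zs : Set ↥D := ⋂ Z ∈ t, (Z : Set ↥D) with hZsdef
    have hZsclopen : IsClopen Zs := isClopen_biInter_finset (fun Z _ => Z.2.1)
    have haZs : a ∈ Zs := mem_iInter₂.mpr (fun Z _ => Z.2.2)
    have hZsS' : Zs ∩ S' = ∅ := by
      rw [eq_empty_iff_forall_notMem]
      rintro x ⟨hx1, hx2⟩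
      obtain ⟨Z, hZt, hZx⟩ := mem_iUnion₂.mp (ht hx2)
      exact hZx (mem_iInter₂.mp hx1 Z hZt)
    set E : Set X := Subtype.val '' Zs with hEdef
    have hEcomp : IsCompact E := (hZsclopen.1.isCompact).image continuous_subtype_val
    have hED : E ⊆ D := by rintro x ⟨z, _, rfl⟩; exact z.2
    have hElt : ∀ x ∈ E, infDist x K1 < r := by
      rintro x ⟨z, hz, rfl⟩
      have hle : infDist (z : X) K1 ≤ r := z.2.2
      rcases lt_or_eq_of_le hle with h | h
      · exact h
      · exfalso
        have : z ∈ Zs ∩ S' := ⟨hz, ⟨z.2, h⟩⟩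
        rw [hZsS'] at this
        exact this
    obtain ⟨O, hOopen, hOpre⟩ := isOpen_induced_iff.mp hZsclopen.2
    set U1 : Set X := O ∩ {x | infDist x K1 < r} with hU1def
    have hU1open : IsOpen U1 := hOopen.inter (isOpen_lt (continuous_infDist_pt K1) continuous_const)
    have hEU1 : E = U1 ∩ K2 := by
      apply Subset.antisymm
      · rintro x ⟨z, hz, rfl⟩
        refine ⟨⟨?_, hElt _ (mem_image_of_mem _ hz)⟩, hDsub z.2⟩
        have : z ∈ Subtype.val ⁻¹' O := by rw [hOpre]; exact hz
        exact this
      · rintro x ⟨⟨hxO, hxr⟩, hxK2⟩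
        have hxD : x ∈ D := ⟨hxK2, le_of_lt hxr⟩
        have : (⟨x, hxD⟩ : ↥D) ∈ Subtype.val ⁻¹' O := hxO
        rw [hOpre] at this
        exact ⟨⟨x, hxD⟩, this, rfl⟩
    have hsep := h2conn.isPreconnected U1 Eᶜ hU1open hEcomp.isClosed.isOpen_compl ?_ ?_ ?_
    · obtain ⟨z, hzK2, hzU1, hzEc⟩ := hsep
      exact hzEc (hEU1 ▸ ⟨hzU1, hzK2⟩)
    · intro x hxK2
      by_cases hxE : x ∈ E
      · rw [hEU1] at hxE; exact Or.inl hxE.1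
      · exact Or.inr hxE
    · refine ⟨a0, hsub ha0K1, ?_⟩
      have : a0 ∈ E := ⟨a, haZs, rfl⟩
      rw [hEU1] at this
      exact this.1
    · exact ⟨p, hpK2, fun hpE => hpD (hED hpE)⟩
  obtain ⟨q, hqM, hqS⟩ := key
  refine ⟨M, hMcomp, hMconn, hK1M, hMD.trans hDsub, ?_, ?_⟩
  · intro hMe
    rw [hMe] at hqM
    have : infDist q K1 = 0 := infDist_zero_of_mem hqM
    rw [hSdef] at hqS
    have := hqS.2
    linarith
  · intro hMe
    rw [hMe] at hMD
    exact hpD (hMD hpK2)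
end OCPrivate

/-- An order arc in the hyperspace of subcontinua: for subcontinua `A ⊆ B` of a metric
continuum `X` there is a continuous, increasing map `α : [0,1] → C(X)` with `α 0 = A`
and `α 1 = B`. -/
theorem stmt_19 {X : Type*} [MetricSpace X] [CompactSpace X] [ConnectedSpace X] [Nonempty X]
    (A B : Set X) (hAcomp : IsCompact A) (hAconn : IsConnected A)
    (hBcomp : IsCompact B) (hBconn : IsConnected B) (hAB : A ⊆ B) :
    ∃ α : unitInterval → {K : TopologicalSpace.NonemptyCompacts X // IsConnected (K : Set X)},
      Continuous α ∧
      ((α 0 : TopologicalSpace.NonemptyCompacts X) : Set X) = A ∧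
      ((α 1 : TopologicalSpace.NonemptyCompacts X) : Set X) = B ∧
      ∀ s t : unitInterval, s ≤ t →
        ((α s : TopologicalSpace.NonemptyCompacts X) : Set X) ⊆
          ((α t : TopologicalSpace.NonemptyCompacts X) : Set X) := by
  classical
  obtain ⟨u, hu⟩ := TopologicalSpace.exists_dense_seq X
  set μ : Set X → ℝ := ocMu u with hμdef
  set P : Set X → Prop := fun K => A ⊆ K ∧ K ⊆ B ∧ IsCompact K ∧ IsConnected K with hPdef
  have hPA : P A := ⟨le_refl _, hAB, hAcomp, hAconn⟩
  have hPB : P B := ⟨hAB, le_refl _, hBcomp, hBconn⟩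
  -- a maximal chain in the poset of intermediate continua
  obtain ⟨c, hcmax, hcsub⟩ :=
    IsChain.exists_maxChain (r := (· ≤ ·)) (c := {(⟨A, hPA⟩ : {K : Set X // P K}), ⟨B, hPB⟩})
      (by
        intro x hx y hy hxy
        rcases hx with rfl | hx
        · rcases hy with rfl | hy
          · exact absurd rfl hxy
          · rw [mem_singleton_iff] at hy; subst hy
            exact Or.inl hAB
        · rw [mem_singleton_iff] at hx; subst hx
          rcases hy with rfl | hy
          · exact Or.inr hAB
          · rw [mem_singleton_iff] at hy; subst hy
            exact absurd rfl hxy)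
  set 𝒞 : Set (Set X) := Subtype.val '' c with h𝒞def
  have hCP : ∀ K ∈ 𝒞, P K := by rintro K ⟨⟨K, hK⟩, _, rfl⟩; exact hK
  have hCchain : IsChain (· ⊆ ·) 𝒞 := by
    rintro K ⟨⟨K, hK⟩, hKc, rfl⟩ L ⟨⟨L, hL⟩, hLc, rfl⟩ hne
    have : (⟨K, hK⟩ : {K : Set X // P K}) ≠ ⟨L, hL⟩ := by
      intro h; exact hne (congrArg Subtype.val h)
    exact hcmax.isChain hKc hLc this
  have hA𝒞 : A ∈ 𝒞 := ⟨⟨A, hPA⟩, hcsub (by simp), rfl⟩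
  have hB𝒞 : B ∈ 𝒞 := ⟨⟨B, hPB⟩, hcsub (by simp), rfl⟩
  have hmax : ∀ M, P M → (∀ K ∈ 𝒞, K ⊆ M ∨ M ⊆ K) → M ∈ 𝒞 := by
    intro M hM hcomp
    have hchain' : IsChain (· ≤ ·) (insert (⟨M, hM⟩ : {K : Set X // P K}) c) := by
      apply hcmax.isChain.insert
      intro L hLc hne
      rcases hcomp L.1 ⟨L, hLc, rfl⟩ with h | h
      · exact Or.inr h
      · exact Or.inl h
    have := hcmax.2 hchain' (subset_insert _ _)
    refine ⟨⟨M, hM⟩, ?_, rfl⟩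
    rw [this]
    exact mem_insert _ _
  -- basic facts about μ on the chain
  have hKne : ∀ K ∈ 𝒞, K.Nonempty := fun K hK => (hCP K hK).2.2.2.nonempty
  have hanti : ∀ K ∈ 𝒞, ∀ L ∈ 𝒞, K ⊆ L → μ L ≤ μ K := by
    intro K hK L hL hKL
    exact ocMu_anti hKL (hKne K hK)
  have hstrict : ∀ K ∈ 𝒞, ∀ L ∈ 𝒞, K ⊆ L → K ≠ L → μ L < μ K := by
    intro K hK L hL hKL hne
    obtain ⟨p, hpL, hpK⟩ : ∃ p, p ∈ L ∧ p ∉ K := by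
      by_contra h; push_neg at h; exact hne (hKL.antisymm h)
    exact ocMu_lt hu (hCP K hK).2.2.1.isClosed (hKne K hK) hKL hpL hpK
  have heq_of_mu : ∀ K ∈ 𝒞, ∀ L ∈ 𝒞, K ⊆ L → μ K = μ L → K = L := by
    intro K hK L hL hKL hμ
    by_contra hne
    exact absurd hμ (ne_of_gt (hstrict K hK L hL hKL hne))
  have hcmp_of_mu : ∀ K ∈ 𝒞, ∀ L ∈ 𝒞, μ K ≤ μ L → L ⊆ K := by
    intro K hK L hL hμ
    rcases hCchain.total hL hK with h | h
    · exact h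
    · rcases eq_or_ne K L with rfl | hne2
      · exact le_refl _
      · exact absurd hμ (not_le.mpr (hstrict K hK L hL h hne2))
  -- closure under intersections of nonempty subfamilies
  have hC1 : ∀ F : Set (Set X), F ⊆ 𝒞 → F.Nonempty → ⋂₀ F ∈ 𝒞 := by
    intro F hF hFne
    obtain ⟨K0, hK0F⟩ := hFne
    have hsubB : ⋂₀ F ⊆ B := (sInter_subset_of_mem hK0F).trans (hCP K0 (hF hK0F)).2.1
    have hsupA : A ⊆ ⋂₀ F := by
      intro x hx
      rw [mem_sInter]
      exact fun K hK => (hCP K (hF hK)).1 hx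
    have hcl : IsClosed (⋂₀ F) := isClosed_sInter (fun K hK => (hCP K (hF hK)).2.2.1.isClosed)
    have hcomp : IsCompact (⋂₀ F) := hBcomp.of_isClosed_subset hcl hsubB
    have hconn : IsConnected (⋂₀ F) := by
      refine ⟨hAconn.nonempty.mono hsupA, ?_⟩
      exact ocChain_sInter_preconnected ⟨K0, hK0F⟩ (hCchain.mono hF)
        (fun K hK => (hCP K (hF hK)).2.2.1) (fun K hK => (hCP K (hF hK)).2.2.2.isPreconnected)
    refine hmax _ ⟨hsupA, hsubB, hcomp, hconn⟩ ?_
    intro K hK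
    by_cases h : ∀ L ∈ F, K ⊆ L
    · exact Or.inl (subset_sInter h)
    · push_neg at h
      obtain ⟨L, hLF, hKL⟩ := h
      rcases hCchain.total hK (hF hLF) with h' | h'
      · exact absurd h' hKL
      · exact Or.inr ((sInter_subset_of_mem hLF).trans h')
  -- closure under closures of unions of nonempty subfamilies
  have hC2 : ∀ F : Set (Set X), F ⊆ 𝒞 → F.Nonempty → closure (⋃₀ F) ∈ 𝒞 := by
    intro F hF hFne
    obtain ⟨K0, hK0F⟩ := hFne
    obtain ⟨a0, ha0⟩ := hAconn.nonempty
    have hsubB : closure (⋃₀ F) ⊆ B := by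
      apply closure_minimal _ hBcomp.isClosed
      exact sUnion_subset (fun K hK => (hCP K (hF hK)).2.1)
    have hsupA : A ⊆ closure (⋃₀ F) :=
      ((hCP K0 (hF hK0F)).1.trans (subset_sUnion_of_mem hK0F)).trans subset_closure
    have hcomp : IsCompact (closure (⋃₀ F)) := hBcomp.of_isClosed_subset isClosed_closure hsubB
    have hconn : IsConnected (closure (⋃₀ F)) := by
      refine ⟨hAconn.nonempty.mono hsupA, IsPreconnected.closure ?_⟩
      exact isPreconnected_sUnion a0 F (fun K hK => (hCP K (hF hK)).1 ha0)
        (fun K hK => (hCP K (hF hK)).2.2.2.isPreconnected)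
    refine hmax _ ⟨hsupA, hsubB, hcomp, hconn⟩ ?_
    intro K hK
    by_cases h : ∃ L ∈ F, K ⊆ L
    · obtain ⟨L, hLF, hKL⟩ := h
      exact Or.inl (hKL.trans ((subset_sUnion_of_mem hLF).trans subset_closure))
    · push_neg at h
      refine Or.inr (closure_minimal (sUnion_subset (fun L hLF => ?_)) (hCP K hK).2.2.1.isClosed)
      rcases hCchain.total (hF hLF) hK with h' | h'
      · exact h'
      · rcases eq_or_ne K L with rfl | hne
        · exact le_refl _
        · exact absurd h' (h L hLF)
  -- order-density of the maximal chain
  have hdense : ∀ K ∈ 𝒞, ∀ L ∈ 𝒞, K ⊆ L → K ≠ L →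
      ∃ M ∈ 𝒞, (K ⊆ M ∧ K ≠ M) ∧ (M ⊆ L ∧ M ≠ L) := by
    intro K hK L hL hKL hne
    by_contra hcon
    obtain ⟨M, hMc, hMconn, hKM, hML, hMK, hML2⟩ :=
      ocExists_between (hCP K hK).2.2.1 (hCP K hK).2.2.2 (hCP L hL).2.2.1 (hCP L hL).2.2.2 hKL hne
    have hPM : P M := ⟨(hCP K hK).1.trans hKM, hML.trans (hCP L hL).2.1, hMc, hMconn⟩
    have hM𝒞 : M ∈ 𝒞 := by
      refine hmax M hPM ?_
      intro N hN
      rcases hCchain.total hN hK with h | h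
      · exact Or.inl (h.trans hKM)
      · rcases hCchain.total hN hL with h' | h'
        · -- K ⊆ N ⊆ L : N is strictly between, contradicting hcon, unless N = K or N = L
          rcases eq_or_ne N K with rfl | hNK
          · exact Or.inl hKM
          · rcases eq_or_ne N L with rfl | hNL
            · exact Or.inr hML
            · exact absurd ⟨N, hN, ⟨h, fun h'' => hNK h''.symm⟩, h', hNL⟩ hcon
        · exact Or.inr (hML.trans h')
    exact hcon ⟨M, hM𝒞, ⟨hKM, fun h => hMK h.symm⟩, hML, hML2⟩
  -- the parametrized family
  set vA : ℝ := μ A with hvA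
  set vB : ℝ := μ B with hvB
  have hBA : vB ≤ vA := hanti A hA𝒞 B hB𝒞 hAB
  set D : ℝ → Set (Set X) := fun v => {K ∈ 𝒞 | μ K ≤ v} with hDdef
  set G : ℝ → Set X := fun v => ⋂₀ D v with hGdef
  have hBD : ∀ v, vB ≤ v → B ∈ D v := fun v hv => ⟨hB𝒞, hv⟩
  have hG𝒞 : ∀ v, vB ≤ v → G v ∈ 𝒞 := by
    intro v hv
    exact hC1 (D v) (fun K hK => hK.1) ⟨B, hBD v hv⟩
  have hGanti : ∀ v w, v ≤ w → G w ⊆ G v := by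
    intro v w hvw
    apply sInter_subset_sInter
    intro K hK
    exact ⟨hK.1, hK.2.trans hvw⟩
  have hGsub : ∀ v, ∀ K ∈ D v, G v ⊆ K := fun v K hK => sInter_subset_of_mem hK
  -- μ (G v) = v on [vB, vA]
  have hμG : ∀ v, vB ≤ v → v ≤ vA → μ (G v) = v := by
    intro v hv1 hv2
    have hGv𝒞 := hG𝒞 v hv1
    have hDchain : IsChain (· ⊆ ·) (D v) := hCchain.mono (fun K hK => hK.1)
    have hDcomp : ∀ K ∈ D v, IsCompact K := fun K hK => (hCP K hK.1).2.2.1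
    -- upper bound
    have hub : μ (G v) ≤ v := by
      by_contra hcon
      push_neg at hcon
      set δ : ℝ := (μ (G v) - v) / 4 with hδdef
      have hδ : 0 < δ := by rw [hδdef]; linarith
      obtain ⟨K, hKD, hKth⟩ := ocChain_inter_thickening ⟨B, hBD v hv1⟩ hDchain hDcomp hδ
      have := ocMu_le_add (u := u) (hKne _ hGv𝒞) (hGsub v K hKD) (hDcomp K hKD) hδ hKth
      have hKv : μ K ≤ v := hKD.2
      rw [hδdef] at this
      simp only [← hμdef] at this
      linarith
    -- lower bound via the union of the small members
    set E : Set (Set X) := {K ∈ 𝒞 | v ≤ μ K} with hEdef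
    have hAE : A ∈ E := ⟨hA𝒞, hv2⟩
    have hEchain : IsChain (· ⊆ ·) E := hCchain.mono (fun K hK => hK.1)
    have hEcomp : ∀ K ∈ E, IsCompact K := fun K hK => (hCP K hK.1).2.2.1
    set L : Set X := closure (⋃₀ E) with hLdef
    have hL𝒞 : L ∈ 𝒞 := hC2 E (fun K hK => hK.1) ⟨A, hAE⟩
    have hEsubG : ∀ K ∈ E, K ⊆ G v := by
      intro K hK
      apply subset_sInter
      intro N hN
      exact hcmp_of_mu N hN.1 K hK.1 (le_trans hN.2 hK.2)
    have hLG : L ⊆ G v :=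
      closure_minimal (sUnion_subset hEsubG) (hCP _ hGv𝒞).2.2.1.isClosed
    have hlb : v ≤ μ L := by
      by_contra hcon
      push_neg at hcon
      set δ : ℝ := (v - μ L) / 4 with hδdef
      have hδ : 0 < δ := by rw [hδdef]; linarith
      obtain ⟨K, hKE, hKth⟩ := ocChain_union_thickening ⟨A, hAE⟩ hEchain hEcomp hδ
      have hKL : K ⊆ L := (subset_sUnion_of_mem hKE).trans subset_closure
      have := ocMu_le_add (u := u) (hKne K hKE.1) hKL (hCP L hL𝒞).2.2.1 hδ hKth
      have hKv : v ≤ μ K := hKE.2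
      rw [hδdef] at this
      simp only [← hμdef] at this
      linarith
    -- no gaps
    rcases eq_or_lt_of_le hub with h | h
    · exact h
    exfalso
    have hLne : L ≠ G v := by
      intro h'
      rw [h'] at hlb
      linarith
    obtain ⟨M, hM𝒞, ⟨hLM, hLMne⟩, ⟨hMG, hMGne⟩⟩ := hdense L hL𝒞 (G v) hGv𝒞 hLG hLne
    rcases le_total (μ M) v with hc | hc
    · exact hMGne (hMG.antisymm (hGsub v M ⟨hM𝒞, hc⟩))
    · exact hLMne (((subset_sUnion_of_mem (show M ∈ E from ⟨hM𝒞, hc⟩)).trans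
        subset_closure).antisymm hLM).symm
  -- endpoints
  have hGA : G vA = A := by
    have hsupA : A ⊆ G vA := subset_sInter (fun K hK => (hCP K hK.1).1)
    exact (heq_of_mu A hA𝒞 (G vA) (hG𝒞 vA hBA) hsupA (by rw [hμG vA hBA (le_refl _)])).symm
  have hGB : G vB = B := by
    have h1 : G vB ⊆ B := (hCP _ (hG𝒞 vB (le_refl _))).2.1
    exact heq_of_mu (G vB) (hG𝒞 vB (le_refl _)) B hB𝒞 h1
      (by rw [hμG vB (le_refl _) hBA, hvB])
  -- approximation from the right (smaller parameter w > v means smaller set)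
  have hUp : ∀ v, vB ≤ v → v < vA → ∀ ε : ℝ, 0 < ε →
      ∃ w, v < w ∧ w ≤ vA ∧ G v ⊆ thickening ε (G w) := by
    intro v hv1 hv2 ε hε
    set F : Set (Set X) := G '' Ioc v vA with hFdef
    have hFsub : F ⊆ 𝒞 := by
      rintro K ⟨w, hw, rfl⟩
      exact hG𝒞 w (hv1.trans (le_of_lt hw.1))
    have hFne : F.Nonempty := ⟨G vA, vA, ⟨hv2, le_refl _⟩, rfl⟩
    have hFchain : IsChain (· ⊆ ·) F := hCchain.mono hFsub
    have hFcomp : ∀ K ∈ F, IsCompact K := fun K hK => (hCP K (hFsub hK)).2.2.1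
    set L : Set X := closure (⋃₀ F) with hLdef
    have hL𝒞 : L ∈ 𝒞 := hC2 F hFsub hFne
    have hLsubG : L ⊆ G v := by
      apply closure_minimal _ (hCP _ (hG𝒞 v hv1)).2.2.1.isClosed
      apply sUnion_subset
      rintro K ⟨w, hw, rfl⟩
      exact hGanti v w (le_of_lt hw.1)
    have hμL : μ L = v := by
      have hub : μ L ≤ v := by
        by_contra hcon
        push_neg at hcon
        set w : ℝ := min vA ((v + μ L) / 2) with hwdef
        have hw1 : v < w := lt_min hv2 (by linarith)
        have hw2 : w ≤ vA := min_le_left _ _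
        have hsub : G w ⊆ L :=
          (subset_sUnion_of_mem (show G w ∈ F from ⟨w, ⟨hw1, hw2⟩, rfl⟩)).trans subset_closure
        have := hanti (G w) (hG𝒞 w (hv1.trans (le_of_lt hw1))) L hL𝒞 hsub
        rw [hμG w (hv1.trans (le_of_lt hw1)) hw2] at this
        have hwle : w ≤ (v + μ L) / 2 := min_le_right _ _
        linarith
      have hlb : v ≤ μ L := by
        have := hanti L hL𝒞 (G v) (hG𝒞 v hv1) hLsubG
        rw [hμG v hv1 (le_of_lt hv2)] at this
        linarith
      linarith
    have hLG : L = G v := by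
      refine heq_of_mu L hL𝒞 (G v) (hG𝒞 v hv1) hLsubG ?_
      rw [hμL, hμG v hv1 (le_of_lt hv2)]
    obtain ⟨K, hKF, hKth⟩ := ocChain_union_thickening hFne hFchain hFcomp hε
    obtain ⟨w, hw, rfl⟩ := hKF
    exact ⟨w, hw.1, hw.2, hLG ▸ hKth⟩
  -- approximation from the left (larger parameter w < v means bigger set)
  have hDown : ∀ v, vB < v → v ≤ vA → ∀ ε : ℝ, 0 < ε →
      ∃ w, vB ≤ w ∧ w < v ∧ G w ⊆ thickening ε (G v) := by
    intro v hv1 hv2 ε hε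
    set F : Set (Set X) := G '' Ico vB v with hFdef
    have hFsub : F ⊆ 𝒞 := by
      rintro K ⟨w, hw, rfl⟩
      exact hG𝒞 w hw.1
    have hFne : F.Nonempty := ⟨G vB, vB, ⟨le_refl _, hv1⟩, rfl⟩
    have hFchain : IsChain (· ⊆ ·) F := hCchain.mono hFsub
    have hFcomp : ∀ K ∈ F, IsCompact K := fun K hK => (hCP K (hFsub hK)).2.2.1
    set I : Set X := ⋂₀ F with hIdef
    have hI𝒞 : I ∈ 𝒞 := hC1 F hFsub hFne
    have hGsubI : G v ⊆ I := by
      apply subset_sInter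
      rintro K ⟨w, hw, rfl⟩
      exact hGanti w v (le_of_lt hw.2)
    have hμI : μ I = v := by
      have hub : μ I ≤ v := by
        have := hanti (G v) (hG𝒞 v (le_of_lt hv1)) I hI𝒞 hGsubI
        rw [hμG v (le_of_lt hv1) hv2] at this
        linarith
      have hlb : v ≤ μ I := by
        by_contra hcon
        push_neg at hcon
        set w : ℝ := max vB ((μ I + v) / 2) with hwdef
        have hw1 : w < v := max_lt hv1 (by linarith)
        have hw2 : vB ≤ w := le_max_left _ _
        have hsub : I ⊆ G w := sInter_subset_of_mem ⟨w, ⟨hw2, hw1⟩, rfl⟩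
        have := hanti I hI𝒞 (G w) (hG𝒞 w hw2) hsub
        rw [hμG w hw2 (hw1.le.trans hv2)] at this
        have hwle : (μ I + v) / 2 ≤ w := le_max_right _ _
        linarith
      linarith
    have hIG : G v = I := by
      refine heq_of_mu (G v) (hG𝒞 v (le_of_lt hv1)) I hI𝒞 hGsubI ?_
      rw [hμI, hμG v (le_of_lt hv1) hv2]
    obtain ⟨K, hKF, hKth⟩ := ocChain_inter_thickening hFne hFchain hFcomp hε
    obtain ⟨w, hw, rfl⟩ := hKF
    refine ⟨w, hw.1, hw.2, ?_⟩
    rw [hIG]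
    exact hKth
  -- one-sided approximations, in a uniform form
  have claim_r : ∀ v, vB ≤ v → v ≤ vA → ∀ ε : ℝ, 0 < ε → ∃ cr : ℝ, 0 < cr ∧
      ∀ w, vB ≤ w → w ≤ vA → v ≤ w → w - v < cr → G v ⊆ thickening ε (G w) := by
    intro v hv1 hv2 ε hε
    rcases lt_or_ge v vA with h | h
    · obtain ⟨w0, hw01, hw02, hw0th⟩ := hUp v hv1 h ε hε
      refine ⟨w0 - v, by linarith, ?_⟩
      intro w _ _ hvw hwc
      exact hw0th.trans (thickening_subset_of_subset ε (hGanti w w0 (by linarith)))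
    · refine ⟨1, one_pos, ?_⟩
      intro w hw1 hw2 hvw _
      have : w = v := le_antisymm (hw2.trans h) hvw
      rw [this]
      exact self_subset_thickening hε _
  have claim_l : ∀ v, vB ≤ v → v ≤ vA → ∀ ε : ℝ, 0 < ε → ∃ cl : ℝ, 0 < cl ∧
      ∀ w, vB ≤ w → w ≤ vA → w ≤ v → v - w < cl → G w ⊆ thickening ε (G v) := by
    intro v hv1 hv2 ε hε
    rcases lt_or_ge vB v with h | h
    · obtain ⟨w0, hw01, hw02, hw0th⟩ := hDown v h hv2 ε hε
      refine ⟨v - w0, by linarith, ?_⟩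
      intro w hw1 _ hwv hwc
      exact (hGanti w0 w (by linarith)).trans hw0th
    · refine ⟨1, one_pos, ?_⟩
      intro w hw1 hw2 hwv _
      have : w = v := le_antisymm hwv (h.trans hw1)
      rw [this]
      exact self_subset_thickening hε _
  -- the objects of the arc
  have hGP : ∀ v, vB ≤ v → P (G v) := fun v hv => hCP _ (hG𝒞 v hv)
  set vt : unitInterval → ℝ := fun t => (1 - (t : ℝ)) * vA + (t : ℝ) * vB with hvtdef
  have hvt1 : ∀ t : unitInterval, vB ≤ vt t := by
    intro t
    have h1 : (t : ℝ) ≤ 1 := t.2.2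
    have h0 : (0 : ℝ) ≤ t := t.2.1
    have : vt t - vB = (1 - (t : ℝ)) * (vA - vB) := by rw [hvtdef]; ring
    nlinarith
  have hvt2 : ∀ t : unitInterval, vt t ≤ vA := by
    intro t
    have h0 : (0 : ℝ) ≤ t := t.2.1
    have : vA - vt t = (t : ℝ) * (vA - vB) := by rw [hvtdef]; ring
    nlinarith
  have hvanti : ∀ s t : unitInterval, s ≤ t → vt t ≤ vt s := by
    intro s t hst
    have h1 : (s : ℝ) ≤ t := hst
    have : vt s - vt t = ((t : ℝ) - s) * (vA - vB) := by rw [hvtdef]; ring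
    nlinarith
  refine ⟨fun t => ⟨⟨⟨G (vt t), (hGP _ (hvt1 t)).2.2.1⟩, (hGP _ (hvt1 t)).2.2.2.nonempty⟩,
    (hGP _ (hvt1 t)).2.2.2⟩, ?_, ?_, ?_, ?_⟩
  · -- continuity
    rw [continuous_induced_rng]
    rw [Metric.continuous_iff]
    intro t ε hε
    obtain ⟨cr, hcr, hcrth⟩ := claim_r (vt t) (hvt1 t) (hvt2 t) (ε / 2) (by linarith)
    obtain ⟨cl, hcl, hclth⟩ := claim_l (vt t) (hvt1 t) (hvt2 t) (ε / 2) (by linarith)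
    set m : ℝ := min cr cl with hmdef
    have hm : 0 < m := lt_min hcr hcl
    refine ⟨m / (vA - vB + 1), div_pos hm (by linarith), ?_⟩
    intro s hs
    have hdist : |(s : ℝ) - (t : ℝ)| < m / (vA - vB + 1) := by
      rw [Subtype.dist_eq, Real.dist_eq] at hs
      exact hs
    have hvdist : |vt s - vt t| < m := by
      have heq : vt s - vt t = ((t : ℝ) - s) * (vA - vB) := by rw [hvtdef]; ring
      rw [heq, abs_mul]
      have h1 : |(t : ℝ) - s| < m / (vA - vB + 1) := by rw [abs_sub_comm]; exact hdist
      have h2 : |vA - vB| = vA - vB := abs_of_nonneg (by linarith)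
      rw [h2]
      calc |(t : ℝ) - s| * (vA - vB) ≤ |(t : ℝ) - s| * (vA - vB + 1) := by
            nlinarith [abs_nonneg ((t : ℝ) - s)]
        _ < m / (vA - vB + 1) * (vA - vB + 1) := by
            apply mul_lt_mul_of_pos_right h1
            linarith
        _ = m := by
            rw [div_mul_cancel₀]
            linarith
    have hGne : ∀ r, vB ≤ r → (G r).Nonempty := fun r hr => (hGP r hr).2.2.2.nonempty
    have key : hausdorffDist (G (vt s)) (G (vt t)) ≤ ε / 2 := by
      rcases le_total (vt s) (vt t) with hc | hc
      · -- G (vt t) ⊆ G (vt s), and G (vt s) ⊆ thickening (ε/2) (G (vt t))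
        have hsub : G (vt t) ⊆ G (vt s) := hGanti (vt s) (vt t) hc
        have hth : G (vt s) ⊆ thickening (ε / 2) (G (vt t)) := by
          apply hclth (vt s) (hvt1 s) (hvt2 s) hc
          rw [abs_sub_comm] at hvdist
          have habs := abs_lt.mp hvdist
          have hmle := min_le_right cr cl
          linarith [habs.2]
        apply hausdorffDist_le_of_infDist (by linarith)
        · intro x hx
          have : x ∈ thickening (ε / 2) (G (vt t)) := hth hx
          exact le_of_lt ((mem_thickening_iff_infDist_lt (hGne _ (hvt1 t))).mp this)
        · intro x hx
          rw [infDist_zero_of_mem (hsub hx)]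
          linarith
      · have hsub : G (vt s) ⊆ G (vt t) := hGanti (vt t) (vt s) hc
        have hth : G (vt t) ⊆ thickening (ε / 2) (G (vt s)) := by
          apply hcrth (vt s) (hvt1 s) (hvt2 s) hc
          have habs := abs_lt.mp hvdist
          have hmle := min_le_left cr cl
          linarith [habs.2]
        apply hausdorffDist_le_of_infDist (by linarith)
        · intro x hx
          rw [infDist_zero_of_mem (hsub hx)]
          linarith
        · intro x hx
          have : x ∈ thickening (ε / 2) (G (vt s)) := hth hx
          exact le_of_lt ((mem_thickening_iff_infDist_lt (hGne _ (hvt1 s))).mp this)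
    calc dist (⟨⟨G (vt s), _⟩, _⟩ : NonemptyCompacts X) ⟨⟨G (vt t), _⟩, _⟩
        = hausdorffDist (G (vt s)) (G (vt t)) := NonemptyCompacts.dist_eq
      _ ≤ ε / 2 := key
      _ < ε := by linarith
  · -- value at 0
    show G (vt 0) = A
    have : vt 0 = vA := by
      rw [hvtdef]
      norm_num
    rw [this, hGA]
  · -- value at 1
    show G (vt 1) = B
    have : vt 1 = vB := by
      rw [hvtdef]
      norm_num
    rw [this, hGB]
  · -- monotonicity
    intro s t hst
    show G (vt s) ⊆ G (vt t)
    exact hGanti (vt t) (vt s) (hvanti s t hst)
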